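/- Let P be a finite p-group generated by two elements a, y, nilpotent of class at most c, with a of order dividing p^n. Then [a, y^{p^{n(c-1)}}] = 1. -/

import Mathlib

open scoped commutatorElement

/-- If `⁅a, z⁆` is central and `a ^ m = 1`, then `⁅a, z ^ m⁆ = 1`. -/
lemma aux_central_commutator_pow {G : Type*} [Group G] (a z : G)
    (h : ⁅a, z⁆ ∈ Subgroup.center G) (m : ℕ) (ha : a ^ m = 1) :
    ⁅a, z ^ m⁆ = 1 := by
  rw [Subgroup.mem_center_iff] at h
  have hcom : ∀ g : G, Commute g ⁅a, z⁆ := fun g => h g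
  -- conjugation formula : z * a * z⁻¹ = ⁅a,z⁆⁻¹ * a
  have hconj : z * a * z⁻¹ = ⁅a, z⁆⁻¹ * a := by
    rw [commutatorElement_def]; group
  -- ⁅a,z⁆ ^ m = 1
  have hcm : ⁅a, z⁆ ^ m = 1 := by
    have h1 : (z * a * z⁻¹) ^ m = z * a ^ m * z⁻¹ := conj_pow
    rw [hconj, ((hcom a).symm.inv_left).mul_pow, ha, mul_one, mul_one, mul_inv_cancel,
      inv_pow] at h1
    exact inv_eq_one.mp h1
  -- ⁅a, z^j⁆ = ⁅a,z⁆ ^ j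
  have hpow : ∀ j : ℕ, ⁅a, z ^ j⁆ = ⁅a, z⁆ ^ j := by
    intro j
    induction j with
    | zero => simp
    | succ j ih =>
      have e1 : ⁅a, z ^ (j + 1)⁆ = ⁅a, z ^ j⁆ * (z ^ j * ⁅a, z⁆ * (z ^ j)⁻¹) := by
        simp only [commutatorElement_def, pow_succ]
        group
      have e2 : z ^ j * ⁅a, z⁆ * (z ^ j)⁻¹ = ⁅a, z⁆ := by
        rw [(hcom (z ^ j)).eq]; group
      rw [e1, e2, ih, pow_succ]
  rw [hpow, hcm]

/-- Let `P` be a finite `p`-group generated by two elements `a, y`, nilpotent of class at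
most `c`, with `a` of order dividing `p^n`.  Then `[a, y^(p^(n*(c-1)))] = 1`. -/
theorem commutator_power_trivial_in_p_group
    {P : Type*} [Group P] [Finite P] (p : ℕ) (hp : p.Prime) (hP : IsPGroup p P)
    (c n : ℕ) (hc : (⊤ : Subgroup P).lowerCentralSeries c = ⊥)
    (a y : P) (hgen : Subgroup.closure {a, y} = (⊤ : Subgroup P))
    (ha : a ^ p ^ n = 1) :
    a⁻¹ * (y ^ p ^ (n * (c - 1)))⁻¹ * a * y ^ p ^ (n * (c - 1)) = 1 := by
  -- main induction : `⁅a, y ^ p ^ (n*k)⁆` lies in the `(k+1)`-st term of the series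
  have key : ∀ k : ℕ, ⁅a, y ^ p ^ (n * k)⁆ ∈ (⊤ : Subgroup P).lowerCentralSeries (k + 1) := by
    intro k
    induction k with
    | zero =>
      rw [lowerCentralSeries_succ, lowerCentralSeries_zero]
      exact Subgroup.commutator_mem_commutator (Subgroup.mem_top _) (Subgroup.mem_top _)
    | succ k ih =>
      set z := y ^ p ^ (n * k) with hz
      set N := (⊤ : Subgroup P).lowerCentralSeries (k + 2) with hN
      have hzpow : z ^ p ^ n = y ^ p ^ (n * (k + 1)) := by
        rw [hz, ← pow_mul, ← pow_add, mul_add, mul_one]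
      let mk : P →* P ⧸ N := QuotientGroup.mk' N
      -- the image of `γ_{k+1}` is central in `P ⧸ γ_{k+2}`
      have hcent : mk ⁅a, z⁆ ∈ Subgroup.center (P ⧸ N) := by
        rw [Subgroup.mem_center_iff]
        intro q
        induction q using QuotientGroup.induction_on with
        | H x =>
          show ((x * ⁅a, z⁆ : P) : P ⧸ N) = ((⁅a, z⁆ * x : P) : P ⧸ N)
          rw [QuotientGroup.eq]
          have e : (x * ⁅a, z⁆)⁻¹ * (⁅a, z⁆ * x) = ⁅⁅a, z⁆⁻¹, x⁻¹⁆ := by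
            rw [commutatorElement_def]; group
          rw [e, hN, lowerCentralSeries_succ]
          exact Subgroup.commutator_mem_commutator (Subgroup.inv_mem _ ih) (Subgroup.mem_top _)
      have h1 : ⁅mk a, mk z⁆ ∈ Subgroup.center (P ⧸ N) := by
        rw [← map_commutatorElement]; exact hcent
      have h2 : (mk a) ^ p ^ n = 1 := by rw [← map_pow, ha, map_one]
      have h3 := aux_central_commutator_pow (mk a) (mk z) h1 (p ^ n) h2
      rw [← map_pow, ← map_commutatorElement] at h3
      have h4 : ⁅a, z ^ p ^ n⁆ ∈ N := (QuotientGroup.eq_one_iff _).mp h3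
      rwa [hzpow] at h4
  have hfin : ⁅a, y ^ p ^ (n * (c - 1))⁆ ∈ (⊤ : Subgroup P).lowerCentralSeries c := by
    have h := key (c - 1)
    exact lowerCentralSeries_antitone _ (by omega) h
  rw [hc, Subgroup.mem_bot] at hfin
  have hcomm := commutatorElement_eq_one_iff_commute.mp hfin
  calc a⁻¹ * (y ^ p ^ (n * (c - 1)))⁻¹ * a * y ^ p ^ (n * (c - 1))
      = a⁻¹ * ((y ^ p ^ (n * (c - 1)))⁻¹ * (a * y ^ p ^ (n * (c - 1)))) := by group
    _ = a⁻¹ * ((y ^ p ^ (n * (c - 1)))⁻¹ * (y ^ p ^ (n * (c - 1)) * a)) := by rw [hcomm.eq]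
    _ = 1 := by group
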